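/- Let ζ, ψ, κ, ϑ be as follows: ζ and ψ are Young functions, ψ̃(x) = ψ(x)/x is strictly increasing from 0 to ∞, κ^{-1}(x) = ζ^{-1}(x)ψ̃^{-1}(x), and ϑ = κ^{-1} ∘ ψ̃. Then the function ζ̃ = κ ∘ ϑ* is equivalent to ζ, i.e., there exists K such that ζ̃(K^{-1}x) ≤ ζ(x) ≤ ζ̃(2x) for all sufficiently large x. -/
import Mathlib

open Filter Topology MeasureTheory
open scoped ENNReal
noncomputable section

/-- A Young function: strictly increasing, convex on `[0,∞)`, vanishing at `0`. -/
def IsYoung (f : ℝ → ℝ) : Prop :=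
  StrictMonoOn f (Set.Ici 0) ∧ ConvexOn ℝ (Set.Ici 0) f ∧ f 0 = 0

/-- Legendre transform of a real function (sup over `y ≥ 0`), `ℝ≥0∞`-valued. -/
def Leg (f : ℝ → ℝ) (x : ℝ) : ℝ≥0∞ :=
  ⨆ y : {y : ℝ // 0 ≤ y}, ENNReal.ofReal (x * y - f y)

/-- Legendre transform of an `ℝ≥0∞`-valued function. -/
def LegE (f : ℝ → ℝ≥0∞) (x : ℝ) : ℝ≥0∞ :=
  ⨆ y : {y : ℝ // 0 ≤ y}, (ENNReal.ofReal (x * y) - f y)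

/-- Monotone extension of a real function on `[0,∞)` to `ℝ≥0∞` arguments. -/
def extE (f : ℝ → ℝ) (t : ℝ≥0∞) : ℝ≥0∞ :=
  ⨆ s : {s : ℝ // 0 ≤ s ∧ ENNReal.ofReal s ≤ t}, ENNReal.ofReal (f s)

/-- Monotone extension of an `ℝ≥0∞`-valued function to `ℝ≥0∞` arguments. -/
def extLT (f : ℝ → ℝ≥0∞) (t : ℝ≥0∞) : ℝ≥0∞ :=
  ⨆ s : {s : ℝ // 0 ≤ s ∧ ENNReal.ofReal s ≤ t}, f s

/-- Generalized (right-continuous) inverse of an `ℝ≥0∞`-valued function. -/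
def invE (g : ℝ → ℝ≥0∞) (t : ℝ≥0∞) : ℝ≥0∞ :=
  ⨅ s : {s : ℝ // 0 ≤ s ∧ t ≤ g s}, ENNReal.ofReal s

/-- `ρ(x) = sup_{y ≥ 0} (φ(xy) - ψ(y))/y`. -/
def rhoSup (φ ψ : ℝ → ℝ) (x : ℝ) : ℝ≥0∞ :=
  ⨆ y : {y : ℝ // 0 ≤ y}, ENNReal.ofReal ((φ (x * y) - ψ y) / y)

/-- `ζ(x) = sup_{y ≥ 0} (φ(xy) - ψ(y)/y)`. -/
def zetaSup (φ ψ : ℝ → ℝ) (x : ℝ) : ℝ≥0∞ :=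
  ⨆ y : {y : ℝ // 0 ≤ y}, ENNReal.ofReal (φ (x * y) - ψ y / y)

/-- Domination order on real functions: `f(x) ≤ C₁ g(C₂ x)` for large `x`. -/
def DominR (f g : ℝ → ℝ) : Prop :=
  ∃ C₁ C₂ x₀ : ℝ, 0 < C₁ ∧ 0 < C₂ ∧ 0 < x₀ ∧ ∀ x ≥ x₀, f x ≤ C₁ * g (C₂ * x)

/-- Equivalence of real functions: mutual domination. -/
def EquivR (f g : ℝ → ℝ) : Prop := DominR f g ∧ DominR g f

/-- Domination order on `ℝ≥0∞`-valued functions. -/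
def DominE (f g : ℝ → ℝ≥0∞) : Prop :=
  ∃ C₁ C₂ x₀ : ℝ, 0 < C₁ ∧ 0 < C₂ ∧ 0 < x₀ ∧
    ∀ x ≥ x₀, f x ≤ ENNReal.ofReal C₁ * g (C₂ * x)

/-- Equivalence of `ℝ≥0∞`-valued functions: mutual domination. -/
def EquivE (f g : ℝ → ℝ≥0∞) : Prop := DominE f g ∧ DominE g f

/-- The function ζ̃ = κ ∘ ϑ* is equivalent to ζ: ζ̃(K⁻¹x) ≤ ζ(x) ≤ ζ̃(2x) for large x. -/
theorem stmt8 (ζ ψ ζinv tψinv κ κinv : ℝ → ℝ)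
    (hζ : IsYoung ζ) (hψ : IsYoung ψ)
    (htψ : StrictMonoOn (fun x => ψ x / x) (Set.Ici 0))
    (htψ0 : ψ 0 / 0 = 0)
    (htψi : Tendsto (fun x => ψ x / x) atTop atTop)
    (hζinv : ∀ x ≥ (0:ℝ), 0 ≤ ζinv x ∧ ζ (ζinv x) = x)
    (htinv : ∀ x ≥ (0:ℝ), 0 ≤ tψinv x ∧ ψ (tψinv x) / tψinv x = x)
    (hκinv : ∀ x ≥ (0:ℝ), κinv x = ζinv x * tψinv x)
    (hκ : ∀ x ≥ (0:ℝ), 0 ≤ κ x ∧ κinv (κ x) = x ∧ κ (κinv x) = x) :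
    ∃ K x₀ : ℝ, 0 < K ∧ 0 < x₀ ∧ ∀ x ≥ x₀,
      extE κ (Leg (fun t => κinv (ψ t / t)) (K⁻¹ * x)) ≤ ENNReal.ofReal (ζ x) ∧
      ENNReal.ofReal (ζ x) ≤ extE κ (Leg (fun t => κinv (ψ t / t)) (2 * x)) := by
  obtain ⟨hζmono, hζconv, hζ0⟩ := hζ
  -- basic nonnegativity facts
  have hψt0 : ∀ y : ℝ, 0 ≤ y → 0 ≤ ψ y / y := by
    intro y hy
    have := htψ.monotoneOn (Set.mem_Ici.mpr le_rfl) (Set.mem_Ici.mpr hy) hy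
    simpa [htψ0] using this
  have hζnn : ∀ x : ℝ, 0 ≤ x → 0 ≤ ζ x := by
    intro x hx
    have := hζmono.monotoneOn (Set.mem_Ici.mpr le_rfl) (Set.mem_Ici.mpr hx) hx
    simpa [hζ0] using this
  -- left inverse facts
  have hζinv_left : ∀ x : ℝ, 0 ≤ x → ζinv (ζ x) = x := by
    intro x hx
    have h1 := hζinv (ζ x) (hζnn x hx)
    exact hζmono.injOn (Set.mem_Ici.mpr h1.1) (Set.mem_Ici.mpr hx) h1.2
  have htinv_left : ∀ y : ℝ, 0 ≤ y → tψinv (ψ y / y) = y := by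
    intro y hy
    have h1 := htinv (ψ y / y) (hψt0 y hy)
    exact htψ.injOn (Set.mem_Ici.mpr h1.1) (Set.mem_Ici.mpr hy) h1.2
  -- κinv is strictly monotone on [0,∞)
  have hκinvmono : ∀ a b : ℝ, 0 ≤ a → a < b → κinv a < κinv b := by
    intro a b ha hab
    have hb : (0:ℝ) ≤ b := ha.trans hab.le
    have hζa := hζinv a ha
    have hζb := hζinv b hb
    have hta := htinv a ha
    have htb := htinv b hb
    have h1 : ζinv a < ζinv b := by
      have : ζ (ζinv a) < ζ (ζinv b) := by rw [hζa.2, hζb.2]; exact hab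
      exact (hζmono.lt_iff_lt (Set.mem_Ici.mpr hζa.1) (Set.mem_Ici.mpr hζb.1)).mp this
    have h2 : tψinv a < tψinv b := by
      have : ψ (tψinv a) / tψinv a < ψ (tψinv b) / tψinv b := by
        rw [hta.2, htb.2]; exact hab
      exact (htψ.lt_iff_lt (Set.mem_Ici.mpr hta.1) (Set.mem_Ici.mpr htb.1)).mp this
    rw [hκinv a ha, hκinv b hb]
    nlinarith [hζa.1, hta.1]
  -- κ is monotone on [0,∞)
  have hκmono : ∀ a b : ℝ, 0 ≤ a → a ≤ b → κ a ≤ κ b := by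
    intro a b ha hab
    by_contra h
    push_neg at h
    have hb : (0:ℝ) ≤ b := ha.trans hab
    have := hκinvmono (κ b) (κ a) (hκ b hb).1 h
    rw [(hκ a ha).2.1, (hκ b hb).2.1] at this
    exact absurd hab (not_le.mpr this)
  refine ⟨1, 1, one_pos, one_pos, fun x hx => ?_⟩
  have hx0 : (0:ℝ) ≤ x := zero_le_one.trans hx
  have hζx : 0 ≤ ζ x := hζnn x hx0
  set t := tψinv (ζ x) with ht_def
  obtain ⟨ht0, hψtt⟩ := htinv (ζ x) hζx
  have hκinvζ : κinv (ζ x) = x * t := by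
    rw [hκinv (ζ x) hζx, hζinv_left x hx0]
  have hc0 : (0:ℝ) ≤ x * t := mul_nonneg hx0 ht0
  have hκc : κ (x * t) = ζ x := by
    rw [← hκinvζ]; exact (hκ (ζ x) hζx).2.2
  -- upper bound on the Legendre transform at x
  have hLegU : Leg (fun s => κinv (ψ s / s)) x ≤ ENNReal.ofReal (x * t) := by
    refine iSup_le ?_
    rintro ⟨y, hy⟩
    refine ENNReal.ofReal_le_ofReal ?_
    show x * y - κinv (ψ y / y) ≤ x * t
    have hϑ : κinv (ψ y / y) = ζinv (ψ y / y) * y := by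
      rw [hκinv _ (hψt0 y hy), htinv_left y hy]
    obtain ⟨hu0, hζu⟩ := hζinv (ψ y / y) (hψt0 y hy)
    rw [hϑ]
    by_cases hxu : x ≤ ζinv (ψ y / y)
    · nlinarith
    · push_neg at hxu
      have hζlt : ζ (ζinv (ψ y / y)) < ζ x :=
        hζmono (Set.mem_Ici.mpr hu0) (Set.mem_Ici.mpr hx0) hxu
      rw [hζu] at hζlt
      have hyt : y < t := by
        have : ψ y / y < ψ t / t := by rw [hψtt]; exact hζlt
        exact (htψ.lt_iff_lt (Set.mem_Ici.mpr hy) (Set.mem_Ici.mpr ht0)).mp this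
      nlinarith
  -- lower bound on the Legendre transform at 2x
  have hLegL : ENNReal.ofReal (x * t) ≤ Leg (fun s => κinv (ψ s / s)) (2 * x) := by
    refine le_iSup_of_le ⟨t, ht0⟩ ?_
    refine ENNReal.ofReal_le_ofReal ?_
    show x * t ≤ 2 * x * t - κinv (ψ t / t)
    rw [hψtt, hκinvζ]
    ring_nf
    linarith
  constructor
  · -- first inequality
    rw [inv_one, one_mul]
    refine iSup_le ?_
    rintro ⟨s, hs0, hsle⟩
    refine ENNReal.ofReal_le_ofReal ?_
    have hsc : s ≤ x * t :=
      (ENNReal.ofReal_le_ofReal_iff hc0).mp (hsle.trans hLegU)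
    calc κ s ≤ κ (x * t) := hκmono s (x * t) hs0 hsc
      _ = ζ x := hκc
  · -- second inequality
    refine le_iSup_of_le ⟨x * t, hc0, hLegL⟩ ?_
    exact le_of_eq (by rw [hκc])
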